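/- Let (c_j)_{j ≥ 1} be a nonincreasing sequence of strictly positive reals with Σ_j c_j³ < ∞ and Σ_j c_j² = ∞, and set C := Σ_j c_j³. For n ≥ 1 and l ∈ ℕ, let x^{(n,l)} := (c_1 n^{-1/3}, …, c_l n^{-1/3}). Then there exists a sequence l(n) → ∞ with Σ_{i=1}^{l(n)} c_i² / n^{1/3} → 1, and for any such choice, writing x^{(n)} = x^{(n, l(n))} and σ_r = Σ_i (x_i^{(n)})^r: (i) σ_2 → 0; (ii) σ_3 / σ_2³ → C; and (iii) x_j^{(n)} / σ_2 → c_j for every fixed j ≥ 1, as n → ∞. Thus the parameter (κ, c) with κ = 0 and c ∈ ℓ³ \ ℓ² arises from the entrance-law hypotheses. -/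

import Mathlib

open Filter Topology

/-- The `j`-th entry of the configuration `x^{(n,l)} = (c_1 n^{-1/3}, …, c_l n^{-1/3})`
(entries beyond the length `l` are `0`). -/
noncomputable def dustEntry (c : ℕ → ℝ) (l n j : ℕ) : ℝ :=
  if j < l then c j * (n : ℝ) ^ (-(1 : ℝ) / 3) else 0

/-- `σ_r(x^{(n,l)})`, the sum of the `r`-th powers of the `l` entries of `x^{(n,l)}`. -/
noncomputable def dustSigma (c : ℕ → ℝ) (r l n : ℕ) : ℝ :=
  ∑ j ∈ Finset.range l, dustEntry c l n j ^ r

lemma dustSigma_eq (c : ℕ → ℝ) (r l n : ℕ) :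
    dustSigma c r l n = (∑ j ∈ Finset.range l, c j ^ r) * ((n : ℝ) ^ (-(1 : ℝ) / 3)) ^ r := by
  unfold dustSigma dustEntry
  rw [Finset.sum_mul]
  refine Finset.sum_congr rfl fun j hj => ?_
  rw [if_pos (Finset.mem_range.mp hj), mul_pow]

/-- let `c` be nonincreasing, strictly positive, cube-summable but not
square-summable, `C = Σ_j c_j³`. There exists `l(n) → ∞` with
`Σ_{i<l(n)} c_i² / n^{1/3} → 1`, and for any such choice, with `x^{(n)} = x^{(n, l(n))}`:
(i) `σ₂ → 0`; (ii) `σ₃ / σ₂³ → C`; (iii) `x_j^{(n)} / σ₂ → c_j` for every fixed `j`.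
Thus `κ = 0` with `c ∈ ℓ³ \ ℓ²` arises from the entrance-law hypotheses. -/
theorem dustConfig_entrance_asymptotics (c : ℕ → ℝ) (hmono : Antitone c)
    (hpos : ∀ j, 0 < c j) (hsum3 : Summable (fun j => c j ^ 3))
    (hsum2 : ¬ Summable (fun j => c j ^ 2)) :
    (∃ l : ℕ → ℕ, Tendsto l atTop atTop ∧
      Tendsto (fun n : ℕ => (∑ i ∈ Finset.range (l n), c i ^ 2) / (n : ℝ) ^ ((1 : ℝ) / 3))
        atTop (𝓝 1)) ∧
    ∀ l : ℕ → ℕ, Tendsto l atTop atTop →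
      Tendsto (fun n : ℕ => (∑ i ∈ Finset.range (l n), c i ^ 2) / (n : ℝ) ^ ((1 : ℝ) / 3))
        atTop (𝓝 1) →
      (Tendsto (fun n : ℕ => dustSigma c 2 (l n) n) atTop (𝓝 0) ∧
        Tendsto (fun n : ℕ => dustSigma c 3 (l n) n / (dustSigma c 2 (l n) n) ^ 3) atTop
          (𝓝 (∑' j, c j ^ 3)) ∧
        ∀ j : ℕ,
          Tendsto (fun n : ℕ => dustEntry c (l n) n j / dustSigma c 2 (l n) n) atTop
            (𝓝 (c j))) := by
  -- notation
  have hS_mono : Monotone (fun l : ℕ => ∑ i ∈ Finset.range l, c i ^ 2) := fun l₁ l₂ h =>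
    Finset.sum_le_sum_of_subset_of_nonneg (Finset.range_subset_range.mpr h) fun i _ _ => sq_nonneg _
  have hS_top : Tendsto (fun l : ℕ => ∑ i ∈ Finset.range l, c i ^ 2) atTop atTop :=
    (not_summable_iff_tendsto_nat_atTop_of_nonneg (fun i => sq_nonneg _)).mp hsum2
  have ha_top : Tendsto (fun n : ℕ => (n : ℝ) ^ ((1 : ℝ) / 3)) atTop atTop :=
    (tendsto_rpow_atTop (by norm_num)).comp tendsto_natCast_atTop_atTop
  have ha_pos : ∀ n : ℕ, 1 ≤ n → 0 < (n : ℝ) ^ ((1 : ℝ) / 3) := fun n hn =>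
    Real.rpow_pos_of_pos (by exact_mod_cast hn) _
  have hrpow_neg : ∀ n : ℕ, (n : ℝ) ^ (-(1 : ℝ) / 3) = ((n : ℝ) ^ ((1 : ℝ) / 3))⁻¹ := fun n => by
    rw [neg_div, Real.rpow_neg (Nat.cast_nonneg n)]
  constructor
  · -- existence of l
    have hex : ∀ n : ℕ, ∃ l : ℕ, (n : ℝ) ^ ((1 : ℝ) / 3) ≤ ∑ i ∈ Finset.range l, c i ^ 2 :=
      fun n => (hS_top.eventually_ge_atTop _).exists
    refine ⟨fun n => Nat.find (hex n), ?_, ?_⟩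
    · refine tendsto_atTop.mpr fun m => ?_
      filter_upwards [ha_top.eventually_gt_atTop (∑ i ∈ Finset.range m, c i ^ 2)] with n hn
      by_contra hlt
      push_neg at hlt
      have h1 := Nat.find_spec (hex n)
      have h2 : (∑ i ∈ Finset.range (Nat.find (hex n)), c i ^ 2) ≤
          ∑ i ∈ Finset.range m, c i ^ 2 := hS_mono hlt.le
      linarith
    · have hub : ∀ n : ℕ, 1 ≤ n →
          (∑ i ∈ Finset.range (Nat.find (hex n)), c i ^ 2) ≤
            (n : ℝ) ^ ((1 : ℝ) / 3) + c 0 ^ 2 := by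
        intro n hn
        have hlpos : 1 ≤ Nat.find (hex n) := by
          rcases Nat.eq_zero_or_pos (Nat.find (hex n)) with h | h
          · exfalso
            have := Nat.find_spec (hex n)
            rw [h] at this
            simp at this
            have := ha_pos n hn
            linarith
          · exact h
        have hk : Nat.find (hex n) = (Nat.find (hex n) - 1) + 1 := (Nat.succ_pred_eq_of_pos hlpos).symm
        have hmin : (∑ i ∈ Finset.range (Nat.find (hex n) - 1), c i ^ 2) < (n : ℝ) ^ ((1 : ℝ) / 3) := by
          have := Nat.find_min (hex n) (m := Nat.find (hex n) - 1) (by omega)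
          push_neg at this
          exact this
        have hc : c (Nat.find (hex n) - 1) ^ 2 ≤ c 0 ^ 2 :=
          pow_le_pow_left₀ (hpos _).le (hmono (Nat.zero_le _)) 2
        calc (∑ i ∈ Finset.range (Nat.find (hex n)), c i ^ 2)
            = (∑ i ∈ Finset.range (Nat.find (hex n) - 1), c i ^ 2) + c (Nat.find (hex n) - 1) ^ 2 := by
              conv_lhs => rw [hk]
              rw [Finset.sum_range_succ]
          _ ≤ (n : ℝ) ^ ((1 : ℝ) / 3) + c 0 ^ 2 := by linarith
      have hupper : Tendsto (fun n : ℕ => 1 + c 0 ^ 2 / (n : ℝ) ^ ((1 : ℝ) / 3)) atTop (𝓝 1) := by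
        have := (tendsto_const_nhds (x := c 0 ^ 2) (f := atTop)).div_atTop ha_top
        simpa using (tendsto_const_nhds (x := (1:ℝ)) (f := atTop)).add this
      refine tendsto_of_tendsto_of_tendsto_of_le_of_le' tendsto_const_nhds hupper ?_ ?_
      · filter_upwards [eventually_ge_atTop 1] with n hn
        have := Nat.find_spec (hex n)
        rw [le_div_iff₀ (ha_pos n hn)]
        linarith
      · filter_upwards [eventually_ge_atTop 1] with n hn
        rw [div_le_iff₀ (ha_pos n hn), add_mul, div_mul_cancel₀ _ (ha_pos n hn).ne', one_mul]
        exact hub n hn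
  · -- asymptotics for any valid l
    intro l hl hratio
    have hSpos : ∀ᶠ n : ℕ in atTop, 0 < ∑ i ∈ Finset.range (l n), c i ^ 2 := by
      filter_upwards [hl.eventually_ge_atTop 1] with n hn
      exact Finset.sum_pos (fun i _ => pow_pos (hpos i) 2) (Finset.nonempty_range_iff.mpr (by omega))
    have hinv : Tendsto (fun n : ℕ => ((n : ℝ) ^ ((1 : ℝ) / 3))⁻¹) atTop (𝓝 0) :=
      ha_top.inv_tendsto_atTop
    have hσ2 : Tendsto (fun n : ℕ => dustSigma c 2 (l n) n) atTop (𝓝 0) := by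
      have heq : (fun n : ℕ => dustSigma c 2 (l n) n) =ᶠ[atTop] fun n : ℕ =>
          ((∑ i ∈ Finset.range (l n), c i ^ 2) / (n : ℝ) ^ ((1 : ℝ) / 3)) *
            ((n : ℝ) ^ ((1 : ℝ) / 3))⁻¹ := by
        filter_upwards [eventually_ge_atTop 1] with n hn
        rw [dustSigma_eq, hrpow_neg, div_eq_mul_inv]
        ring
      have : Tendsto (fun n : ℕ =>
          ((∑ i ∈ Finset.range (l n), c i ^ 2) / (n : ℝ) ^ ((1 : ℝ) / 3)) *
            ((n : ℝ) ^ ((1 : ℝ) / 3))⁻¹) atTop (𝓝 0) := by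
        simpa using hratio.mul hinv
      exact this.congr' heq.symm
    refine ⟨hσ2, ?_, ?_⟩
    · -- σ₃ / σ₂³ → C
      have hT : Tendsto (fun n : ℕ => ∑ i ∈ Finset.range (l n), c i ^ 3) atTop
          (𝓝 (∑' j, c j ^ 3)) := hsum3.hasSum.tendsto_sum_nat.comp hl
      have hlim : Tendsto (fun n : ℕ =>
          (∑ i ∈ Finset.range (l n), c i ^ 3) /
            ((∑ i ∈ Finset.range (l n), c i ^ 2) / (n : ℝ) ^ ((1 : ℝ) / 3)) ^ 3) atTop
          (𝓝 (∑' j, c j ^ 3)) := by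
        have := hT.div (hratio.pow 3) (by norm_num)
        simpa [Pi.div_def] using this
      refine hlim.congr' ?_
      filter_upwards [eventually_ge_atTop 1, hSpos] with n hn hS
      have hapos := ha_pos n hn
      rw [dustSigma_eq, dustSigma_eq, hrpow_neg]
      field_simp
    · -- entry / σ₂ → c j
      intro j
      have hlim : Tendsto (fun n : ℕ =>
          c j / ((∑ i ∈ Finset.range (l n), c i ^ 2) / (n : ℝ) ^ ((1 : ℝ) / 3))) atTop
          (𝓝 (c j)) := by
        have := (tendsto_const_nhds (x := c j) (f := atTop)).div hratio one_ne_zero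
        simpa [Pi.div_def] using this
      refine hlim.congr' ?_
      filter_upwards [eventually_ge_atTop 1, hSpos, hl.eventually_gt_atTop j] with n hn hS hj
      have hapos := ha_pos n hn
      rw [dustSigma_eq, hrpow_neg, dustEntry, if_pos hj, hrpow_neg]
      field_simp
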